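/- Let (λ_j)_{j∈ℕ} be a nondecreasing sequence of positive reals with λ_j ~ c j² as j → ∞ for some c > 0. Then for every κ ∈ (0,1/2) and every τ > 0, one has ∑_{j∈ℕ} log(1+τλ_j)/(τλ_j) ≤ C_κ τ^{-1/2-κ}, where C_κ depends only on κ and the sequence (λ_j). -/
import Mathlib

open Real Set Filter

lemma my_rpow_add_le {a b p : ℝ} (ha : 0 ≤ a) (hb : 0 ≤ b) (hp : 0 ≤ p) (hp1 : p ≤ 1) :
    (a + b) ^ p ≤ a ^ p + b ^ p := by
  lift a to NNReal using ha
  lift b to NNReal using hb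
  have := NNReal.rpow_add_le_add_rpow a b hp hp1
  exact_mod_cast this

lemma log_one_add_le_rpow {α : ℝ} (hα : 0 < α) (hα1 : α ≤ 1) {x : ℝ} (hx : 0 ≤ x) :
    Real.log (1 + x) ≤ x ^ α / α := by
  have h1x : (0:ℝ) < 1 + x := by linarith
  have h1 : Real.log ((1 + x) ^ α) ≤ (1 + x) ^ α - 1 :=
    Real.log_le_sub_one_of_pos (Real.rpow_pos_of_pos h1x α)
  have h2 : (1 + x) ^ α ≤ 1 + x ^ α := by
    have := my_rpow_add_le (zero_le_one) hx hα.le hα1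
    simpa using this
  have h3 : α * Real.log (1 + x) ≤ x ^ α := by
    rw [← Real.log_rpow h1x]
    linarith
  rw [le_div_iff₀ hα]
  linarith

theorem stmt3 (lam : ℕ → ℝ) (hpos : ∀ j, 0 < lam j) (hmono : Monotone lam)
    (c : ℝ) (hc : 0 < c)
    (hasymp : Filter.Tendsto (fun j : ℕ => lam j / (j : ℝ) ^ 2) Filter.atTop (nhds c)) :
    ∀ κ ∈ Set.Ioo (0:ℝ) (1/2),
      ∃ C : ℝ, 0 < C ∧ ∀ τ : ℝ, 0 < τ →
        (∑' j : ℕ, Real.log (1 + τ * lam j) / (τ * lam j)) ≤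
          C * τ ^ (-(1:ℝ)/2 - κ) := by
  rintro κ ⟨hκ0, hκ2⟩
  set s : ℝ := 1/2 + κ with hs
  have hspos : 0 < s := by rw [hs]; linarith
  have hs1 : s < 1 := by rw [hs]; linarith
  set α : ℝ := 1 - s with hα
  have hαpos : 0 < α := by rw [hα]; linarith
  have hα1 : α ≤ 1 := by rw [hα]; linarith
  -- eventual lower bound on lam
  have hev : ∀ᶠ j : ℕ in atTop, c / 2 ≤ lam j / (j : ℝ) ^ 2 :=
    hasymp.eventually (eventually_ge_nhds (by linarith))
  obtain ⟨N, hN⟩ := eventually_atTop.mp hev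
  -- summability of lam ^ (-s)
  have hsum : Summable (fun j : ℕ => lam j ^ (-s)) := by
    rw [← summable_nat_add_iff (N + 1)]
    have hbig : Summable (fun n : ℕ => (n : ℝ) ^ ((-2) * s)) :=
      summable_nat_rpow.mpr (by rw [hs]; linarith)
    have hbig2 : Summable (fun j : ℕ =>
        (c / 2) ^ (-s) * ((j + (N + 1) : ℕ) : ℝ) ^ ((-2) * s)) :=
      (((summable_nat_add_iff (N + 1)).mpr hbig).mul_left _)
    refine Summable.of_nonneg_of_le (fun j => (Real.rpow_pos_of_pos (hpos _) _).le)
      (fun j => ?_) hbig2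
    set n : ℕ := j + (N + 1) with hn
    have hnN : N ≤ n := by omega
    have hn0 : (0:ℝ) < (n : ℝ) := by exact_mod_cast Nat.pos_of_ne_zero (by omega)
    have hlam : c / 2 * (n : ℝ) ^ 2 ≤ lam n := by
      have := hN n hnN
      rw [le_div_iff₀ (by positivity)] at this
      linarith
    have h1 : lam n ^ (-s) ≤ (c / 2 * (n : ℝ) ^ 2) ^ (-s) :=
      Real.rpow_le_rpow_of_nonpos (by positivity) hlam (by linarith)
    have h2 : (c / 2 * (n : ℝ) ^ 2) ^ (-s) = (c / 2) ^ (-s) * ((n : ℝ) ^ 2) ^ (-s) :=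
      Real.mul_rpow (by positivity) (by positivity)
    have h3 : ((n : ℝ) ^ 2) ^ (-s) = (n : ℝ) ^ ((-2) * s) := by
      rw [← Real.rpow_natCast (n : ℝ) 2, ← Real.rpow_mul hn0.le]
      norm_num
    calc lam n ^ (-s) ≤ (c / 2 * (n : ℝ) ^ 2) ^ (-s) := h1
      _ = (c / 2) ^ (-s) * (n : ℝ) ^ ((-2) * s) := by rw [h2, h3]
  set T : ℝ := ∑' j : ℕ, lam j ^ (-s) with hT
  have hT0 : 0 ≤ T := tsum_nonneg fun j => (Real.rpow_pos_of_pos (hpos _) _).le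
  refine ⟨T / α + 1, by positivity, fun τ hτ => ?_⟩
  have hbound : ∀ j : ℕ, Real.log (1 + τ * lam j) / (τ * lam j) ≤
      τ ^ (-s) * α⁻¹ * lam j ^ (-s) := by
    intro j
    have hx : 0 < τ * lam j := mul_pos hτ (hpos j)
    have h1 := log_one_add_le_rpow hαpos hα1 hx.le
    have e1 : (τ * lam j) ^ (α - 1) = (τ * lam j) ^ α / (τ * lam j) := by
      rw [Real.rpow_sub hx, Real.rpow_one]
    have e2 : α - 1 = -s := by rw [hα]; ring
    have e3 : (τ * lam j) ^ (-s) = τ ^ (-s) * lam j ^ (-s) :=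
      Real.mul_rpow hτ.le (hpos j).le
    calc Real.log (1 + τ * lam j) / (τ * lam j)
        ≤ ((τ * lam j) ^ α / α) / (τ * lam j) := by gcongr
      _ = ((τ * lam j) ^ α / (τ * lam j)) / α := by ring
      _ = τ ^ (-s) * α⁻¹ * lam j ^ (-s) := by
          rw [← e1, e2, e3]; ring
  have hsummand_nonneg : ∀ j : ℕ, 0 ≤ Real.log (1 + τ * lam j) / (τ * lam j) := by
    intro j
    have hx : 0 < τ * lam j := mul_pos hτ (hpos j)
    exact div_nonneg (Real.log_nonneg (by linarith)) hx.le
  have hg : Summable (fun j : ℕ => τ ^ (-s) * α⁻¹ * lam j ^ (-s)) := hsum.mul_left _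
  have hf : Summable (fun j : ℕ => Real.log (1 + τ * lam j) / (τ * lam j)) :=
    Summable.of_nonneg_of_le hsummand_nonneg hbound hg
  calc (∑' j : ℕ, Real.log (1 + τ * lam j) / (τ * lam j))
      ≤ ∑' j : ℕ, τ ^ (-s) * α⁻¹ * lam j ^ (-s) := Summable.tsum_le_tsum hbound hf hg
    _ = τ ^ (-s) * α⁻¹ * T := tsum_mul_left
    _ ≤ (T / α + 1) * τ ^ (-(1:ℝ)/2 - κ) := by
        have hes : -(1:ℝ)/2 - κ = -s := by rw [hs]; ring
        rw [hes]
        have hτs : 0 ≤ τ ^ (-s) := (Real.rpow_pos_of_pos hτ _).le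
        have heq : τ ^ (-s) * α⁻¹ * T = (T / α) * τ ^ (-s) := by ring
        rw [heq]
        nlinarith
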